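/- Consider n bidders with i.i.d. values from distribution F with inverse quantile function v(·), and payment functions c(p)=p^d with d ≥ 1. The uniform-allocation mechanism with quantile reserve q̂ — allocating 1/Z to each of the Z bidders whose quantile is at most q̂ and charging each winner (v(q̂)/Z)^{1/d} — has expected revenue APX(q̂) ≥ n·(v(q̂)/(1+(n-1)q̂))^{1/d}·q̂. -/

import Mathlib

open MeasureTheory Set
open scoped Classical

/-- Bernoulli-type inequality for negative exponents in `[-1,0]`. -/
lemma bern_neg {e u : ℝ} (he0 : 0 < e) (he1 : e ≤ 1) (hu : -1 < u) :
    1 - e * u ≤ (1 + u) ^ (-e) := by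
  have h1u : (0:ℝ) < 1 + u := by linarith
  have hb : (1 + u) ^ e ≤ 1 + e * u :=
    rpow_one_add_le_one_add_mul_self hu.le he0.le he1
  have hpos : (0:ℝ) < (1 + u) ^ e := Real.rpow_pos_of_pos h1u e
  have h2 : (0:ℝ) < 1 + e * u := lt_of_lt_of_le hpos hb
  rw [Real.rpow_neg h1u.le]
  have hinv : (1 + e * u)⁻¹ ≤ ((1 + u) ^ e)⁻¹ := by
    apply inv_anti₀ hpos hb
  refine le_trans ?_ hinv
  rcases le_or_gt (1 - e * u) 0 with h | h
  · exact h.trans (by positivity)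
  · have hmul : (1 - e * u) * (1 + e * u) ≤ 1 := by nlinarith [sq_nonneg (e * u)]
    rw [← one_div]
    rw [le_div_iff₀ h2]
    exact hmul

/-- Tangent-line inequality for `x ↦ x^(-e)`, `0 < e ≤ 1`, at `x₀ > 0`. -/
lemma tangent_rpow {e x₀ x : ℝ} (he0 : 0 < e) (he1 : e ≤ 1) (hx₀ : 0 < x₀) (hx : 0 < x) :
    x₀ ^ (-e) - e * x₀ ^ (-e - 1) * (x - x₀) ≤ x ^ (-e) := by
  set u : ℝ := (x - x₀) / x₀ with hu_def
  have hu : -1 < u := by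
    rw [hu_def, lt_div_iff₀ hx₀]; linarith
  have hxu : x = x₀ * (1 + u) := by
    rw [hu_def]; field_simp <;> ring
  have h1u : (0:ℝ) < 1 + u := by linarith
  have hmul : x ^ (-e) = x₀ ^ (-e) * (1 + u) ^ (-e) := by
    rw [hxu, Real.mul_rpow hx₀.le h1u.le]
  have hpow : x₀ ^ (-e - 1) = x₀ ^ (-e) * x₀⁻¹ := by
    rw [← Real.rpow_neg_one x₀, ← Real.rpow_add hx₀]
    norm_num [sub_eq_add_neg]
  have hb := bern_neg he0 he1 hu
  have hx₀e : (0:ℝ) < x₀ ^ (-e) := Real.rpow_pos_of_pos hx₀ _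
  have key : x₀ ^ (-e) * (1 - e * u) ≤ x₀ ^ (-e) * (1 + u) ^ (-e) :=
    mul_le_mul_of_nonneg_left hb hx₀e.le
  have hsub : x₀ ^ (-e - 1) * (x - x₀) = x₀ ^ (-e) * u := by
    rw [hpow, hu_def]; field_simp
  calc x₀ ^ (-e) - e * x₀ ^ (-e - 1) * (x - x₀)
      = x₀ ^ (-e) * (1 - e * u) := by rw [mul_assoc, hsub]; ring
    _ ≤ x₀ ^ (-e) * (1 + u) ^ (-e) := key
    _ = x ^ (-e) := hmul.symm

/-- The uniform-allocation mechanism with quantile reserve `q̂` (bidders' quantiles are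
i.i.d. uniform on `[0,1]`; each of the `Z` bidders with quantile at most `q̂` gets `1/Z`
and pays `(v(q̂)/Z)^(1/d)`) has expected revenue at least
`n * (v(q̂)/(1+(n-1) q̂))^(1/d) * q̂`. -/
theorem stmt_9 (n : ℕ) (hn : 0 < n) (d : ℝ) (hd : 1 ≤ d)
    (v : ℝ → ℝ) (qhat : ℝ) (hq : qhat ∈ Icc (0:ℝ) 1) (hv : 0 ≤ v qhat) :
    ∫ qq : Fin n → ℝ,
        (∑ i, (v qhat * (if qq i ≤ qhat then (1:ℝ) else 0)
            / (∑ j, if qq j ≤ qhat then (1:ℝ) else 0)) ^ (1/d))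
      ∂(Measure.pi fun _ : Fin n => volume.restrict (Icc (0:ℝ) 1))
    ≥ n * (v qhat / (1 + ((n:ℝ) - 1) * qhat)) ^ (1/d) * qhat := by
  obtain ⟨hp0, hp1⟩ := hq
  set p := qhat with hp_def
  set c := v qhat with hc_def
  set e := 1 / d with he_def
  have hd0 : (0:ℝ) < d := lt_of_lt_of_le one_pos hd
  have he0 : 0 < e := by positivity
  have he1 : e ≤ 1 := by
    rw [he_def, div_le_one hd0]; exact hd
  set m : ℝ := ((n:ℝ) - 1) * p with hm_def
  have hn1 : (1:ℝ) ≤ (n:ℝ) := by exact_mod_cast hn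
  have hm0 : 0 ≤ m := mul_nonneg (by linarith) hp0
  have h1m : (0:ℝ) < 1 + m := by linarith
  set A : ℝ := (1 + m) ^ (-e) with hA_def
  set B : ℝ := -(e * (1 + m) ^ (-e - 1)) with hB_def
  set K1 : ℝ := c ^ e * (A - B - B * m) with hK1_def
  set K2 : ℝ := c ^ e * B with hK2_def
  set μ0 : Measure ℝ := volume.restrict (Icc (0:ℝ) 1) with hμ0_def
  haveI : IsProbabilityMeasure μ0 := by
    constructor
    rw [hμ0_def, Measure.restrict_apply MeasurableSet.univ, univ_inter, Real.volume_Icc]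
    norm_num
  set μ : Measure (Fin n → ℝ) := Measure.pi fun _ : Fin n => μ0 with hμ_def
  haveI : IsProbabilityMeasure μ := by rw [hμ_def]; infer_instance
  set X : Fin n → (Fin n → ℝ) → ℝ := fun i qq => if qq i ≤ p then 1 else 0 with hX_def
  have hX01 : ∀ i qq, X i qq = 0 ∨ X i qq = 1 := by
    intro i qq
    by_cases h : qq i ≤ p
    · right; simp [hX_def, h]
    · left; simp [hX_def, h]
  have hXnn : ∀ i qq, 0 ≤ X i qq := by
    intro i qq; rcases hX01 i qq with h | h <;> rw [h] <;> norm_num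
  have hXle : ∀ i qq, X i qq ≤ 1 := by
    intro i qq; rcases hX01 i qq with h | h <;> rw [h] <;> norm_num
  have hXmeas : ∀ i, Measurable (X i) := by
    intro i
    apply Measurable.ite _ measurable_const measurable_const
    exact measurableSet_le (measurable_pi_apply i) measurable_const
  -- measure of Iic p under μ0
  have hμ0Iic : μ0 (Iic p) = ENNReal.ofReal p := by
    rw [hμ0_def, Measure.restrict_apply measurableSet_Iic]
    have : Iic p ∩ Icc (0:ℝ) 1 = Icc 0 p := by
      ext x
      simp only [mem_inter_iff, mem_Iic, mem_Icc]
      constructor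
      · rintro ⟨h1, h2, h3⟩; exact ⟨h2, h1⟩
      · rintro ⟨h1, h2⟩; exact ⟨h2, h1, h2.trans hp1⟩
    rw [this, Real.volume_Icc, sub_zero]
  -- key integral of products of indicators
  have key : ∀ s : Finset (Fin n), (∫ qq, (∏ k ∈ s, X k qq) ∂μ) = p ^ s.card := by
    intro s
    set Bs : Set (Fin n → ℝ) := Set.pi Set.univ (fun k => if k ∈ s then Iic p else univ)
      with hBs_def
    have hBsm : MeasurableSet Bs := by
      apply MeasurableSet.univ_pi
      intro k
      by_cases h : k ∈ s <;> simp [h, measurableSet_Iic]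
    have hrepr : ∀ qq, (∏ k ∈ s, X k qq) = Bs.indicator (fun _ => (1:ℝ)) qq := by
      intro qq
      rw [indicator_apply]
      by_cases h : qq ∈ Bs
      · rw [if_pos h]
        apply Finset.prod_eq_one
        intro k hk
        have hmem : qq k ∈ Iic p := by simpa [hk] using h k (mem_univ k)
        simp [hX_def, hmem.out]
      · rw [if_neg h]
        simp only [hBs_def, Set.mem_pi, mem_univ, forall_true_left, true_implies] at h
        push_neg at h
        obtain ⟨k, hk⟩ := h
        by_cases hks : k ∈ s
        · rw [if_pos hks] at hk
          apply Finset.prod_eq_zero hks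
          simp only [hX_def, mem_Iic] at hk ⊢
          rw [if_neg hk]
        · rw [if_neg hks] at hk
          exact absurd (mem_univ (qq k)) hk
    have hμBs : μ Bs = ENNReal.ofReal p ^ s.card := by
      rw [hμ_def, hBs_def, Measure.pi_pi]
      have : ∀ k : Fin n, μ0 (if k ∈ s then Iic p else univ)
          = if k ∈ s then ENNReal.ofReal p else 1 := by
        intro k
        by_cases h : k ∈ s
        · rw [if_pos h, if_pos h, hμ0Iic]
        · rw [if_neg h, if_neg h, measure_univ]
      simp_rw [this]
      rw [Finset.prod_ite_mem, Finset.univ_inter, Finset.prod_const]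
    calc (∫ qq, (∏ k ∈ s, X k qq) ∂μ) = ∫ qq, Bs.indicator (fun _ => (1:ℝ)) qq ∂μ := by
          simp_rw [hrepr]
      _ = (μ Bs).toReal • (1:ℝ) := integral_indicator_const (1:ℝ) hBsm
      _ = p ^ s.card := by
          rw [hμBs, smul_eq_mul, mul_one, ← ENNReal.ofReal_pow hp0,
            ENNReal.toReal_ofReal (pow_nonneg hp0 _)]
  -- integrability helpers
  have hint_prod : ∀ i j, Integrable (fun qq => X i qq * X j qq) μ := by
    intro i j
    apply (integrable_const (1:ℝ)).mono' ((hXmeas i).mul (hXmeas j)).aestronglyMeasurable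
    filter_upwards with qq
    rw [Real.norm_eq_abs, Pi.mul_apply, abs_of_nonneg (mul_nonneg (hXnn i qq) (hXnn j qq))]
    calc X i qq * X j qq ≤ 1 * 1 :=
          mul_le_mul (hXle i qq) (hXle j qq) (hXnn j qq) zero_le_one
      _ = 1 := by norm_num
  have hint_X : ∀ i, Integrable (X i) μ := by
    intro i
    have := hint_prod i i
    have hiden : ∀ qq, X i qq * X i qq = X i qq := by
      intro qq; rcases hX01 i qq with h | h <;> rw [h] <;> norm_num
    simpa only [hiden] using this
  -- ∫ X i = p
  have hI1 : ∀ i, (∫ qq, X i qq ∂μ) = p := by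
    intro i
    have := key {i}
    simpa using this
  -- X i * X i = X i pointwise
  have hXsq : ∀ i qq, X i qq * X i qq = X i qq := by
    intro i qq; rcases hX01 i qq with h | h <;> rw [h] <;> norm_num
  -- ∫ X i * X j = p² for i ≠ j
  have hI2 : ∀ i j, i ≠ j → (∫ qq, X i qq * X j qq ∂μ) = p ^ 2 := by
    intro i j hij
    have := key {i, j}
    rw [Finset.card_pair hij] at this
    have hprod : ∀ qq, (∏ k ∈ ({i, j} : Finset (Fin n)), X k qq) = X i qq * X j qq := by
      intro qq; rw [Finset.prod_pair hij]
    simp_rw [hprod] at this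
    exact this
  -- ∫ X i * S = p + (n-1) p²
  set S : (Fin n → ℝ) → ℝ := fun qq => ∑ j, X j qq with hS_def
  have hSmeas : Measurable S := by
    apply Finset.measurable_sum
    intro j _
    exact hXmeas j
  have hint_XiS : ∀ i, Integrable (fun qq => X i qq * S qq) μ := by
    intro i
    have : (fun qq => X i qq * S qq) = fun qq => ∑ j, X i qq * X j qq := by
      funext qq; rw [hS_def, Finset.mul_sum]
    rw [this]
    exact integrable_finset_sum _ (fun j _ => hint_prod i j)
  have hI3 : ∀ i, (∫ qq, X i qq * S qq ∂μ) = p + ((n:ℝ) - 1) * p ^ 2 := by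
    intro i
    have hrw : (fun qq => X i qq * S qq) = fun qq => ∑ j, X i qq * X j qq := by
      funext qq; rw [hS_def, Finset.mul_sum]
    rw [hrw, integral_finset_sum _ (fun j _ => hint_prod i j)]
    have hsplit : ∀ j : Fin n, (∫ qq, X i qq * X j qq ∂μ)
        = if j = i then p else p ^ 2 := by
      intro j
      by_cases h : j = i
      · subst h
        rw [if_pos rfl]
        simp_rw [hXsq]
        exact hI1 j
      · rw [if_neg h]
        exact hI2 i j (fun hh => h hh.symm)
    simp_rw [hsplit]
    have hsum : (∑ x : Fin n, if x = i then p else p ^ 2)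
        = ∑ x : Fin n, (p ^ 2 + if x = i then p - p ^ 2 else 0) := by
      apply Finset.sum_congr rfl
      intro x _
      by_cases h : x = i <;> simp [h]
    rw [hsum, Finset.sum_add_distrib, Finset.sum_const, Finset.sum_ite_eq' Finset.univ i
      (fun _ => p - p ^ 2), if_pos (Finset.mem_univ i), Finset.card_univ, Fintype.card_fin]
    push_cast
    ring
  -- the lower-bound function (tangent line)
  set F : (Fin n → ℝ) → ℝ := fun qq => ∑ i, (c * X i qq / S qq) ^ e with hF_def
  set L : (Fin n → ℝ) → ℝ :=
    fun qq => ∑ i, (K1 * X i qq + K2 * (X i qq * S qq)) with hL_def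
  have hL_i_int : ∀ i : Fin n,
      Integrable (fun qq => K1 * X i qq + K2 * (X i qq * S qq)) μ :=
    fun i => ((hint_X i).const_mul K1).add ((hint_XiS i).const_mul K2)
  have hL_int : Integrable L μ := by
    rw [hL_def]
    exact integrable_finset_sum _ (fun i _ => hL_i_int i)
  -- value of ∫ L
  have hL_val : (∫ qq, L qq ∂μ)
      = n * (K1 * p + K2 * (p + ((n:ℝ) - 1) * p ^ 2)) := by
    rw [hL_def]
    rw [integral_finset_sum _ (fun i _ => hL_i_int i)]
    have hterm : ∀ i : Fin n,
        (∫ qq, (K1 * X i qq + K2 * (X i qq * S qq)) ∂μ)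
          = K1 * p + K2 * (p + ((n:ℝ) - 1) * p ^ 2) := by
      intro i
      rw [integral_add ((hint_X i).const_mul K1) ((hint_XiS i).const_mul K2),
        integral_const_mul, integral_const_mul, hI1, hI3]
    simp_rw [hterm]
    rw [Finset.sum_const, Finset.card_univ, Fintype.card_fin, nsmul_eq_mul]
  -- integrability of F
  have hSnn : ∀ qq, 0 ≤ S qq := by
    intro qq
    exact Finset.sum_nonneg (fun j _ => hXnn j qq)
  have hbase_nn : ∀ i qq, 0 ≤ c * X i qq / S qq := by
    intro i qq
    exact div_nonneg (mul_nonneg hv (hXnn i qq)) (hSnn qq)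
  have hbase_le : ∀ i qq, c * X i qq / S qq ≤ c := by
    intro i qq
    rcases hX01 i qq with h | h
    · rw [h, mul_zero, zero_div]; exact hv
    · have hS1 : 1 ≤ S qq := by
        have h2 : X i qq ≤ S qq :=
          Finset.single_le_sum (f := fun j => X j qq)
            (fun j _ => hXnn j qq) (Finset.mem_univ i)
        rw [h] at h2
        exact h2
      rw [h, mul_one]
      exact div_le_self hv hS1
  have hterm_le : ∀ i qq, (c * X i qq / S qq) ^ e ≤ c ^ e := by
    intro i qq
    exact Real.rpow_le_rpow (hbase_nn i qq) (hbase_le i qq) he0.le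
  have hterm_nn : ∀ i qq, 0 ≤ (c * X i qq / S qq) ^ e := by
    intro i qq
    exact Real.rpow_nonneg (hbase_nn i qq) e
  have hF_meas : Measurable F := by
    rw [hF_def]
    apply Finset.measurable_sum
    intro i _
    exact (Real.continuous_rpow_const he0.le).measurable.comp
      ((measurable_const.mul (hXmeas i)).div hSmeas)
  have hF_int : Integrable F μ := by
    apply (integrable_const ((n:ℝ) * c ^ e)).mono' hF_meas.aestronglyMeasurable
    filter_upwards with qq
    rw [hF_def, Real.norm_eq_abs,
      abs_of_nonneg (Finset.sum_nonneg (fun i _ => hterm_nn i qq))]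
    calc (∑ i, (c * X i qq / S qq) ^ e) ≤ ∑ _i : Fin n, c ^ e :=
          Finset.sum_le_sum (fun i _ => hterm_le i qq)
      _ = (n:ℝ) * c ^ e := by
          rw [Finset.sum_const, Finset.card_univ, Fintype.card_fin, nsmul_eq_mul]
  -- pointwise lower bound
  have hle : L ≤ F := by
    intro qq
    show (∑ i, (K1 * X i qq + K2 * (X i qq * S qq))) ≤ ∑ i, (c * X i qq / S qq) ^ e
    apply Finset.sum_le_sum
    intro i _
    rcases hX01 i qq with h | h
    · simp [h, Real.zero_rpow he0.ne']
    · have hS1 : 1 ≤ S qq := by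
        have h2 : X i qq ≤ S qq :=
          Finset.single_le_sum (f := fun j => X j qq)
            (fun j _ => hXnn j qq) (Finset.mem_univ i)
        rw [h] at h2
        exact h2
      have hSpos : 0 < S qq := lt_of_lt_of_le one_pos hS1
      have htan := tangent_rpow he0 he1 h1m hSpos
      have htan' : A + B * (S qq - 1 - m) ≤ (S qq) ^ (-e) := by
        have heq : A + B * (S qq - 1 - m)
            = (1 + m) ^ (-e) - e * (1 + m) ^ (-e - 1) * (S qq - (1 + m)) := by
          rw [hA_def, hB_def]; ring
        rw [heq]
        exact htan
      have hrpow_div : (c / S qq) ^ e = c ^ e * (S qq) ^ (-e) := by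
        rw [Real.div_rpow hv (hSnn qq), Real.rpow_neg (hSnn qq), div_eq_mul_inv]
      calc K1 * X i qq + K2 * (X i qq * S qq)
          = c ^ e * (A + B * (S qq - 1 - m)) := by
            rw [h, hK1_def, hK2_def]; ring
        _ ≤ c ^ e * (S qq) ^ (-e) :=
            mul_le_mul_of_nonneg_left htan' (Real.rpow_nonneg hv e)
        _ = (c * X i qq / S qq) ^ e := by rw [h, mul_one, ← hrpow_div]
  -- final algebra
  have hdiv : (c / (1 + m)) ^ e = c ^ e * A := by
    rw [hA_def, Real.div_rpow hv h1m.le, Real.rpow_neg h1m.le, div_eq_mul_inv]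
  have halg : K1 * p + K2 * (p + ((n:ℝ) - 1) * p ^ 2) = c ^ e * A * p := by
    rw [hK1_def, hK2_def, hm_def]
    ring
  have hmain : (n:ℝ) * (c / (1 + m)) ^ e * p ≤ ∫ qq, F qq ∂μ := by
    have hLF : (∫ qq, L qq ∂μ) ≤ ∫ qq, F qq ∂μ := integral_mono hL_int hF_int hle
    calc (n:ℝ) * (c / (1 + m)) ^ e * p = ∫ qq, L qq ∂μ := by
          rw [hL_val, halg, hdiv]; ring
      _ ≤ ∫ qq, F qq ∂μ := hLF
  exact hmain
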